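/- For the TRIP-Stern sequence for (e,13,12), the maximal terms lie on the path through the tree obtained by alternating between first selecting the left edge and then the right edge: for every n and every word v ∈ {0,1}ⁿ, each of the three entries of Δ(v) is at most the maximum entry of Δ(wₙ), where wₙ = (0,1,0,1,…) is the alternating word of length n beginning with 0. Hence the maximum entry m_n of level n equals the maximum entry of Δ(wₙ). -/
import Mathlib


/-- `f₀(a,b,c) = (a+c,c,b)` for the triplet `(e,13,12)`. -/
def f0 (p : ℤ × ℤ × ℤ) : ℤ × ℤ × ℤ := (p.1 + p.2.2, p.2.2, p.2.1)

/-- `f₁(a,b,c) = (b,a,a+c)` for the triplet `(e,13,12)`. -/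
def f1 (p : ℤ × ℤ × ℤ) : ℤ × ℤ × ℤ := (p.2.1, p.1, p.1 + p.2.2)

/-- One step of the TRIP-Stern tree: apply `f₁` on a `true` and `f₀` on a `false`. -/
def step (p : ℤ × ℤ × ℤ) (i : Bool) : ℤ × ℤ × ℤ := if i then f1 p else f0 p

/-- `Δ(v) = f_{iₙ}(⋯ f_{i₁}(1,1,1) ⋯)`, applying `f_{i₁}` first. -/
def delta (v : List Bool) : ℤ × ℤ × ℤ := v.foldl step (1, 1, 1)

/-- The maximum coordinate of a triple. -/
def maxEntry (p : ℤ × ℤ × ℤ) : ℤ := max p.1 (max p.2.1 p.2.2)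

/-- `m n` is the maximum entry of level `n` of the TRIP-Stern sequence for `(e,13,12)`. -/
noncomputable def m (n : ℕ) : ℤ :=
  Finset.sup' Finset.univ Finset.univ_nonempty
    (fun v : Fin n → Bool => maxEntry (delta (List.ofFn v)))

/-- `altWord n = (0,1,0,1,…)` is the alternating word of length `n` beginning with `0`
(`false` = left edge, `true` = right edge). -/
def altWord (n : ℕ) : List Bool := (List.range n).map (fun k => decide (k % 2 = 1))

lemma delta_concat (v : List Bool) (i : Bool) :
    delta (v ++ [i]) = step (delta v) i := by
  simp [delta, List.foldl_append]

lemma altWord_succ (n : ℕ) :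
    altWord (n + 1) = altWord n ++ [decide (n % 2 = 1)] := by
  simp [altWord, List.range_succ]

/-- Structural facts about the alternating path. -/
lemma altL (n : ℕ) :
    1 ≤ (delta (altWord n)).1 ∧ 1 ≤ (delta (altWord n)).2.1 ∧
    1 ≤ (delta (altWord n)).2.2 ∧
    (delta (altWord n)).2.1 ≤ (delta (altWord n)).1 + (delta (altWord n)).2.2 ∧
    (n % 2 = 0 → (delta (altWord n)).1 ≤ (delta (altWord n)).2.2 ∧
      (delta (altWord n)).2.1 ≤ (delta (altWord n)).2.2) ∧
    (n % 2 = 1 → (delta (altWord n)).2.2 ≤ (delta (altWord n)).1 ∧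
      (delta (altWord n)).2.1 ≤ (delta (altWord n)).1) := by
  induction n with
  | zero => simp [altWord, delta]
  | succ n ih =>
    rw [altWord_succ, delta_concat]
    rcases Nat.mod_two_eq_zero_or_one n with h | h <;>
      simp [h, step, f0, f1] at ih ⊢ <;> omega

/-- Key quantitative facts about the alternating path. -/
lemma altG (n : ℕ) :
    maxEntry (delta (altWord n)) ≤ (delta (altWord n)).1 + (delta (altWord n)).2.2 ∧
    (delta (altWord n)).1 + (delta (altWord n)).2.2 ≤ maxEntry (delta (altWord (n + 1))) ∧
    (delta (altWord n)).1 + (delta (altWord n)).2.1 + (delta (altWord n)).2.2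
      + maxEntry (delta (altWord n))
      ≤ (delta (altWord (n+1))).1 + (delta (altWord (n+1))).2.1 + (delta (altWord (n+1))).2.2 ∧
    (delta (altWord (n+1))).1 + (delta (altWord (n+1))).2.2
      = (delta (altWord n)).1 + (delta (altWord n)).2.1 + (delta (altWord n)).2.2 := by
  have h1 := altL n
  rw [altWord_succ, delta_concat]
  rcases Nat.mod_two_eq_zero_or_one n with h | h <;>
    simp [h, step, f0, f1, maxEntry] at h1 ⊢ <;> omega

/-- Main invariant: any word of length `n` is dominated by the alternating path. -/
lemma inv (v : List Bool) :
    0 ≤ (delta v).1 ∧ 0 ≤ (delta v).2.1 ∧ 0 ≤ (delta v).2.2 ∧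
    (delta v).1 ≤ maxEntry (delta (altWord v.length)) ∧
    (delta v).2.1 ≤ maxEntry (delta (altWord v.length)) ∧
    (delta v).2.2 ≤ maxEntry (delta (altWord v.length)) ∧
    (delta v).1 + (delta v).2.2
      ≤ (delta (altWord v.length)).1 + (delta (altWord v.length)).2.2 ∧
    (delta v).1 + (delta v).2.1 + (delta v).2.2
      ≤ (delta (altWord v.length)).1 + (delta (altWord v.length)).2.1
        + (delta (altWord v.length)).2.2 := by
  induction v using List.reverseRecOn with
  | nil => simp [delta, altWord, maxEntry]
  | append_singleton v i ih =>
    have hG := altG v.length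
    rw [delta_concat]
    have hlen : (v ++ [i]).length = v.length + 1 := by simp
    rw [hlen]
    cases i <;> simp [step, f0, f1] at ih ⊢ <;> omega

/-- For the TRIP-Stern sequence for `(e,13,12)`, the maximal terms lie on the path
obtained by alternating between first selecting the left edge and then the right edge:
every entry of every level-`n` triple `Δ(v)` is at most the maximum entry of
`Δ(altWord n)`, and hence the maximum entry `m n` of level `n` equals the maximum entry
of `Δ(altWord n)`. -/
theorem maxTerms_alternating_e1312 :
    (∀ (n : ℕ) (v : Fin n → Bool),
      (delta (List.ofFn v)).1 ≤ maxEntry (delta (altWord n)) ∧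
      (delta (List.ofFn v)).2.1 ≤ maxEntry (delta (altWord n)) ∧
      (delta (List.ofFn v)).2.2 ≤ maxEntry (delta (altWord n))) ∧
    (∀ n : ℕ, m n = maxEntry (delta (altWord n))) := by
  have key : ∀ (n : ℕ) (v : Fin n → Bool),
      (delta (List.ofFn v)).1 ≤ maxEntry (delta (altWord n)) ∧
      (delta (List.ofFn v)).2.1 ≤ maxEntry (delta (altWord n)) ∧
      (delta (List.ofFn v)).2.2 ≤ maxEntry (delta (altWord n)) := by
    intro n v
    have h := inv (List.ofFn v)
    rw [List.length_ofFn] at h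
    exact ⟨h.2.2.2.1, h.2.2.2.2.1, h.2.2.2.2.2.1⟩
  refine ⟨key, fun n => le_antisymm ?_ ?_⟩
  · apply Finset.sup'_le
    intro v _
    obtain ⟨h1, h2, h3⟩ := key n v
    exact max_le h1 (max_le h2 h3)
  · have hw : List.ofFn (fun k : Fin n => decide ((k : ℕ) % 2 = 1)) = altWord n := by
      apply List.ext_getElem <;> simp [altWord]
    calc maxEntry (delta (altWord n))
        = maxEntry (delta (List.ofFn (fun k : Fin n => decide ((k : ℕ) % 2 = 1)))) := by
          rw [hw]
      _ ≤ m n :=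
          Finset.le_sup' (fun v : Fin n → Bool => maxEntry (delta (List.ofFn v)))
            (Finset.mem_univ (fun k : Fin n => decide ((k : ℕ) % 2 = 1)))
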